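/- Let 0 < a < 1 and r > 0, and define φ(ψ) = 2·arctan( √((1−a)/(1+a)) · tan( (√(1−a²)/(2r))·ψ ) ) for ψ ∈ (−πr/√(1−a²), πr/√(1−a²)). Then φ is differentiable and satisfies the uniformization ODE φ'(ψ) = (1 − a·cos(φ(ψ)))/r on this interval, with φ(0) = 0. -/

import Mathlib

open Filter Set Real

/-- For `0 < a < 1` and `r > 0`, the function
`φ(ψ) = 2·arctan(√((1-a)/(1+a))·tan((√(1-a²)/(2r))·ψ))` solves the uniformization ODE
`φ'(ψ) = (1 - a·cos(φ(ψ)))/r` on `(-πr/√(1-a²), πr/√(1-a²))`, with `φ(0) = 0`. -/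
theorem stmt_17 (a r : ℝ) (ha0 : 0 < a) (ha1 : a < 1) (hr : 0 < r)
    (φ : ℝ → ℝ)
    (hφ : ∀ ψ : ℝ, φ ψ =
      2 * Real.arctan (Real.sqrt ((1 - a) / (1 + a)) *
        Real.tan ((Real.sqrt (1 - a^2) / (2 * r)) * ψ))) :
    (∀ ψ ∈ Set.Ioo (-(Real.pi * r / Real.sqrt (1 - a^2)))
        (Real.pi * r / Real.sqrt (1 - a^2)),
      HasDerivAt φ ((1 - a * Real.cos (φ ψ)) / r) ψ) ∧
    φ 0 = 0 := by
  have ha1' : (0:ℝ) < 1 + a := by linarith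
  have ha1'' : (0:ℝ) < 1 - a := by linarith
  have hs2pos : (0:ℝ) < 1 - a^2 := by nlinarith
  set s : ℝ := Real.sqrt (1 - a^2) with hs_def
  have hs : 0 < s := Real.sqrt_pos.2 hs2pos
  have hs2 : s ^ 2 = 1 - a ^ 2 := Real.sq_sqrt hs2pos.le
  set b : ℝ := Real.sqrt ((1 - a) / (1 + a)) with hb_def
  have hb2 : b ^ 2 = (1 - a) / (1 + a) := Real.sq_sqrt (by positivity)
  have hb2' : b ^ 2 * (1 + a) = 1 - a := by
    rw [hb2]; field_simp
  have hbs : b * s = 1 - a := by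
    rw [hb_def, hs_def, ← Real.sqrt_mul (by positivity)]
    have : (1 - a) / (1 + a) * (1 - a ^ 2) = (1 - a) ^ 2 := by
      field_simp; ring
    rw [this, Real.sqrt_sq ha1''.le]
  constructor
  · intro ψ hψ
    set x : ℝ := s / (2 * r) * ψ with hx_def
    have hc : 0 < s / (2 * r) := by positivity
    have hxmem : x ∈ Ioo (-(π / 2) : ℝ) (π / 2) := by
      have key : s / (2 * r) * (π * r / s) = π / 2 := by
        field_simp
      constructor
      · have := mul_lt_mul_of_pos_left hψ.1 hc
        rw [hx_def]
        calc -(π/2) = s / (2*r) * (-(π * r / s)) := by rw [mul_neg, key]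
          _ < s / (2*r) * ψ := this
      · have := mul_lt_mul_of_pos_left hψ.2 hc
        rw [hx_def]
        calc s / (2*r) * ψ < s / (2*r) * (π * r / s) := this
          _ = π/2 := key
    have hcos : Real.cos x ≠ 0 := (Real.cos_pos_of_mem_Ioo hxmem).ne'
    set t : ℝ := Real.tan x with ht_def
    have h1 : HasDerivAt (fun ψ : ℝ => s / (2 * r) * ψ) (s / (2 * r)) ψ := by
      simpa using (hasDerivAt_id ψ).const_mul (s / (2 * r))
    have h2 : HasDerivAt (fun ψ : ℝ => Real.tan (s / (2 * r) * ψ))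
        (1 / Real.cos x ^ 2 * (s / (2 * r))) ψ :=
      (Real.hasDerivAt_tan hcos).comp ψ h1
    have h3 : HasDerivAt (fun ψ : ℝ => b * Real.tan (s / (2 * r) * ψ))
        (b * (1 / Real.cos x ^ 2 * (s / (2 * r)))) ψ := h2.const_mul b
    have h4 : HasDerivAt (fun ψ : ℝ => Real.arctan (b * Real.tan (s / (2 * r) * ψ)))
        (1 / (1 + (b * t) ^ 2) * (b * (1 / Real.cos x ^ 2 * (s / (2 * r))))) ψ :=
      by have := (Real.hasDerivAt_arctan (b * t)).comp ψ h3; exact this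
    have h5 : HasDerivAt φ
        (2 * (1 / (1 + (b * t) ^ 2) * (b * (1 / Real.cos x ^ 2 * (s / (2 * r)))))) ψ := by
      have : φ = fun ψ : ℝ => 2 * Real.arctan (b * Real.tan (s / (2 * r) * ψ)) := by
        funext ψ; rw [hφ ψ]
      rw [this]
      exact h4.const_mul 2
    -- now identify the derivative value
    have hsec : 1 / Real.cos x ^ 2 = t ^ 2 + 1 := by
      rw [ht_def, ← Real.inv_one_add_tan_sq hcos, one_div, inv_inv]; ring
    have hcosφ : Real.cos (φ ψ) = 2 * (1 / (1 + (b * t) ^ 2)) - 1 := by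
      rw [hφ ψ, Real.cos_two_mul, Real.cos_sq_arctan]
    have hden : (0:ℝ) < 1 + (b * t) ^ 2 := by positivity
    have heq : 2 * (1 / (1 + (b * t) ^ 2) * (b * (1 / Real.cos x ^ 2 * (s / (2 * r)))))
        = (1 - a * Real.cos (φ ψ)) / r := by
      rw [hcosφ, hsec]
      field_simp
      linear_combination (t^2+1) * hbs - t^2 * hb2'
    rw [← heq]
    exact h5
  · rw [hφ 0]
    simp
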